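/- There exists a constant C > 0 such that for every ε ∈ (0,1], the function f_ε(t) = t e^{t² + |t|^{1+ε}} is three times differentiable at every t ≠ 0 and |f_ε'''(t)| ≤ C (|t|^{ε−1} + t⁴) e^{t² + |t|^{1+ε}} for every t ≠ 0. -/

import Mathlib

open Real

/-- The nonlinearity `f_ε(t) = t e^{t² + |t|^{1+ε}}`. -/
noncomputable def fEps (ε : ℝ) (t : ℝ) : ℝ :=
  t * Real.exp (t ^ 2 + |t| ^ (1 + ε))

noncomputable def auxH1 (s ε t : ℝ) : ℝ := 2*t + (1+ε) * (s*t) ^ ε * s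
noncomputable def auxH2 (s ε t : ℝ) : ℝ := 2 + (1+ε) * ε * (s*t) ^ (ε-1)
noncomputable def auxH3 (s ε t : ℝ) : ℝ := (1+ε) * ε * (ε-1) * (s*t) ^ (ε-2) * s
noncomputable def auxE (s ε t : ℝ) : ℝ := Real.exp (t^2 + (s*t) ^ (1+ε))
noncomputable def auxD1 (s ε t : ℝ) : ℝ := (1 + t * auxH1 s ε t) * auxE s ε t
noncomputable def auxD2 (s ε t : ℝ) : ℝ :=
  (2 * auxH1 s ε t + t * auxH2 s ε t + t * (auxH1 s ε t)^2) * auxE s ε t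
noncomputable def auxD3 (s ε t : ℝ) : ℝ :=
  (3 * auxH2 s ε t + t * auxH3 s ε t + 3*(auxH1 s ε t)^2
    + 3*t*(auxH1 s ε t)*(auxH2 s ε t) + t*(auxH1 s ε t)^3) * auxE s ε t

lemma hasDerivAt_rpow_lin (s p t : ℝ) (hst : 0 < s*t) :
    HasDerivAt (fun x => (s*x)^p) (s * p * (s*t)^(p-1)) t := by
  have h : HasDerivAt (fun x : ℝ => s * x) s t := by
    simpa using (hasDerivAt_id t).const_mul s
  have := h.rpow_const (p := p) (Or.inl hst.ne')
  exact this

lemma hasDerivAt_auxh (s ε t : ℝ) (hst : 0 < s*t) :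
    HasDerivAt (fun x => x^2 + (s*x)^(1+ε)) (auxH1 s ε t) t := by
  have h1 : HasDerivAt (fun x : ℝ => x^2) (2*t) t := by
    simpa using (hasDerivAt_pow 2 t)
  have h2 := hasDerivAt_rpow_lin s (1+ε) t hst
  have := h1.add h2
  refine this.congr_deriv ?_
  unfold auxH1
  rw [show (1+ε-1 : ℝ) = ε by ring]
  ring

lemma hasDerivAt_auxH1 (s ε t : ℝ) (hs : s*s = 1) (hst : 0 < s*t) :
    HasDerivAt (auxH1 s ε) (auxH2 s ε t) t := by
  have h1 : HasDerivAt (fun x : ℝ => 2*x) 2 t := by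
    simpa using (hasDerivAt_id t).const_mul 2
  have h2 := ((hasDerivAt_rpow_lin s ε t hst).const_mul (1+ε)).mul_const s
  have := h1.add h2
  refine this.congr_deriv ?_
  unfold auxH2
  rw [show (2:ℝ) + (1 + ε) * (s * ε * (s * t) ^ (ε - 1)) * s
      = 2 + (1+ε)*ε*(s*t)^(ε-1)*(s*s) by ring, hs, mul_one]

lemma hasDerivAt_auxH2 (s ε t : ℝ) (hst : 0 < s*t) :
    HasDerivAt (auxH2 s ε) (auxH3 s ε t) t := by
  have h2 := (hasDerivAt_rpow_lin s (ε-1) t hst).const_mul ((1+ε)*ε)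
  have := (hasDerivAt_const t (2:ℝ)).add h2
  refine this.congr_deriv ?_
  unfold auxH3
  rw [show (ε-1-1 : ℝ) = ε-2 by ring]
  ring

lemma hasDerivAt_auxE (s ε t : ℝ) (hst : 0 < s*t) :
    HasDerivAt (auxE s ε) (auxH1 s ε t * auxE s ε t) t := by
  unfold auxE
  simpa [mul_comm] using (hasDerivAt_auxh s ε t hst).exp

lemma hasDerivAt_f (s ε t : ℝ) (hst : 0 < s*t) :
    HasDerivAt (fun x => x * auxE s ε x) (auxD1 s ε t) t := by
  have := (hasDerivAt_id t).mul (hasDerivAt_auxE s ε t hst)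
  refine this.congr_deriv ?_
  simp only [auxD1, auxD2, id_eq]
  ring

lemma hasDerivAt_auxD1 (s ε t : ℝ) (hs : s*s = 1) (hst : 0 < s*t) :
    HasDerivAt (auxD1 s ε) (auxD2 s ε t) t := by
  have hp : HasDerivAt (fun x => 1 + x * auxH1 s ε x)
      (1 * auxH1 s ε t + t * auxH2 s ε t) t := by
    exact ((hasDerivAt_const t (1:ℝ)).add
      ((hasDerivAt_id t).mul (hasDerivAt_auxH1 s ε t hs hst))).congr_deriv (by simp)
  have := hp.mul (hasDerivAt_auxE s ε t hst)
  refine this.congr_deriv ?_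
  simp only [auxD1, auxD2, id_eq]
  ring

lemma hasDerivAt_auxD2 (s ε t : ℝ) (hs : s*s = 1) (hst : 0 < s*t) :
    HasDerivAt (auxD2 s ε) (auxD3 s ε t) t := by
  have hp : HasDerivAt (fun x => 2 * auxH1 s ε x + x * auxH2 s ε x + x * (auxH1 s ε x)^2)
      (2 * auxH2 s ε t + (1 * auxH2 s ε t + t * auxH3 s ε t)
        + (1 * (auxH1 s ε t)^2 + t * (2 * auxH1 s ε t ^ (2-1) * auxH2 s ε t))) t := by
    refine (((hasDerivAt_auxH1 s ε t hs hst).const_mul 2).add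
      ((hasDerivAt_id t).mul (hasDerivAt_auxH2 s ε t hst))).add
      ((hasDerivAt_id t).mul ?_)
    exact (hasDerivAt_auxH1 s ε t hs hst).pow 2
  have := hp.mul (hasDerivAt_auxE s ε t hst)
  refine this.congr_deriv ?_
  simp only [auxD2, auxD3, id_eq]
  ring

lemma rpow_le_sum (a ε p : ℝ) (ha : 0 < a) (h1 : ε - 1 ≤ p) (h2 : p ≤ 4) :
    a ^ p ≤ a ^ (ε-1) + a ^ (4:ℕ) := by
  have h4 : a ^ ((4:ℕ):ℝ) = a ^ (4:ℕ) := Real.rpow_natCast a 4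
  rcases le_total a 1 with h | h
  · have h5 := Real.rpow_le_rpow_of_exponent_ge ha h h1
    have pos : (0:ℝ) ≤ a ^ (4:ℕ) := by positivity
    linarith
  · have h5 := Real.rpow_le_rpow_of_exponent_le h (show p ≤ ((4:ℕ):ℝ) by push_cast; linarith)
    have pos : (0:ℝ) ≤ a ^ (ε-1) := by positivity
    rw [h4] at h5
    linarith

lemma P3_abs_bound (ε a t H1 H2 H3 : ℝ) (hε0 : 0 < ε) (hε1 : ε ≤ 1)
    (ha : 0 < a) (hat : a = |t|)
    (hA : |H1| ≤ 2*(a + a^ε)) (hB : |H2| ≤ 2*(1 + a^(ε-1))) (hG : |H3| ≤ 2 * a^(ε-2)) :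
    |3*H2 + t*H3 + 3*H1^2 + 3*t*H1*H2 + t*H1^3| ≤ 240 * (a^(ε-1) + a^4) := by
  set u := a^ε with hu
  set v := a^(ε-1) with hv
  set w := a^(ε-2) with hw
  set b := v + a^4 with hb
  have key : ∀ p : ℝ, ε - 1 ≤ p → p ≤ 4 → a ^ p ≤ b := fun p h1 h2 =>
    rpow_le_sum a ε p ha h1 h2
  have h2eq : a ^ ((2:ℕ):ℝ) = a ^ (2:ℕ) := Real.rpow_natCast a 2
  have h3eq : a ^ ((3:ℕ):ℝ) = a ^ (3:ℕ) := Real.rpow_natCast a 3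
  have m0 : 1 ≤ b := by
    have := key 0 (by linarith) (by norm_num)
    rwa [Real.rpow_zero] at this
  have mv : v ≤ b := key (ε-1) le_rfl (by linarith)
  have m2 : a^2 ≤ b := by
    have := key ((2:ℕ):ℝ) (by push_cast; linarith) (by push_cast; norm_num)
    rwa [h2eq] at this
  have mau : a*u ≤ b := by
    have := key (1+ε) (by linarith) (by linarith)
    rwa [Real.rpow_add ha, Real.rpow_one] at this
  have muu : u*u ≤ b := by
    have := key (ε+ε) (by linarith) (by linarith)
    rwa [Real.rpow_add ha] at this
  have ma2v : a^2*v ≤ b := by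
    have := key (((2:ℕ):ℝ)+(ε-1)) (by push_cast; linarith) (by push_cast; linarith)
    rwa [Real.rpow_add ha, h2eq] at this
  have mauv : a*(u*v) ≤ b := by
    have := key (1+(ε+(ε-1))) (by linarith) (by linarith)
    rwa [Real.rpow_add ha, Real.rpow_add ha, Real.rpow_one] at this
  have m4 : a^4 ≤ b := by
    have : (0:ℝ) ≤ v := by positivity
    linarith
  have m3u : a^3*u ≤ b := by
    have := key (((3:ℕ):ℝ)+ε) (by push_cast; linarith) (by push_cast; linarith)
    rwa [Real.rpow_add ha, h3eq] at this
  have m2uu : a^2*(u*u) ≤ b := by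
    have := key (((2:ℕ):ℝ)+(ε+ε)) (by push_cast; linarith) (by push_cast; linarith)
    rwa [Real.rpow_add ha, Real.rpow_add ha, h2eq] at this
  have mauuu : a*(u*(u*u)) ≤ b := by
    have := key (1+(ε+(ε+ε))) (by linarith) (by linarith)
    rwa [Real.rpow_add ha, Real.rpow_add ha, Real.rpow_add ha, Real.rpow_one] at this
  have maw : v = w * a := by
    rw [hv, hw, show ε-1 = (ε-2)+1 by ring, Real.rpow_add ha, Real.rpow_one]
  have hu0 : 0 ≤ u := by positivity
  have hv0 : 0 ≤ v := by positivity
  have hw0 : 0 ≤ w := by positivity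
  have habs : |3*H2 + t*H3 + 3*H1^2 + 3*t*H1*H2 + t*H1^3|
      ≤ 3 * |H2| + a * |H3| + 3 * |H1|^2 + 3*a*(|H1| * |H2|) + a * |H1|^3 := by
    calc |3*H2 + t*H3 + 3*H1^2 + 3*t*H1*H2 + t*H1^3|
        ≤ |3*H2 + t*H3 + 3*H1^2 + 3*t*H1*H2| + |t*H1^3| := abs_add_le _ _
      _ ≤ (|3*H2 + t*H3 + 3*H1^2| + |3*t*H1*H2|) + |t*H1^3| := by
          gcongr; exact abs_add_le _ _
      _ ≤ ((|3*H2 + t*H3| + |3*H1^2|) + |3*t*H1*H2|) + |t*H1^3| := by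
          gcongr; exact abs_add_le _ _
      _ ≤ (((|3*H2| + |t*H3|) + |3*H1^2|) + |3*t*H1*H2|) + |t*H1^3| := by
          gcongr; exact abs_add_le _ _
      _ = 3 * |H2| + a * |H3| + 3 * |H1|^2 + 3*a*(|H1| * |H2|) + a * |H1|^3 := by
          simp only [abs_mul, abs_pow, ← hat]
          norm_num
          ring
  have step2 : 3 * |H2| + a * |H3| + 3 * |H1|^2 + 3*a*(|H1| * |H2|) + a * |H1|^3
      ≤ 3*(2*(1+v)) + a*(2*w) + 3*(2*(a+u))^2 + 3*a*((2*(a+u))*(2*(1+v))) + a*(2*(a+u))^3 := by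
    gcongr <;> positivity
  have step3 : 3*(2*(1+v)) + a*(2*w) + 3*(2*(a+u))^2 + 3*a*((2*(a+u))*(2*(1+v))) + a*(2*(a+u))^3
      ≤ 240 * b := by
    nlinarith [m0, mv, m2, mau, muu, ma2v, mauv, m4, m3u, m2uu, mauuu, maw, ha.le, hu0, hv0, hw0]
  calc |3*H2 + t*H3 + 3*H1^2 + 3*t*H1*H2 + t*H1^3|
      ≤ 3 * |H2| + a * |H3| + 3 * |H1|^2 + 3*a*(|H1| * |H2|) + a * |H1|^3 := habs
    _ ≤ _ := step2.trans step3

lemma auxD3_bound (s ε t : ℝ) (hs : s = 1 ∨ s = -1) (hε0 : 0 < ε) (hε1 : ε ≤ 1)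
    (hst : 0 < s * t) :
    |auxD3 s ε t| ≤ 240 * (|t| ^ (ε-1) + t ^ 4) * Real.exp (t ^ 2 + |t| ^ (1+ε)) := by
  have hat : s * t = |t| := by
    rcases hs with h|h <;> subst h
    · rw [one_mul] at hst ⊢; exact (abs_of_pos hst).symm
    · have : t < 0 := by linarith
      rw [abs_of_neg this]; ring
  have ha : 0 < |t| := hat ▸ hst
  have hs1 : |s| = 1 := by rcases hs with h|h <;> subst h <;> norm_num
  have hTe : (0:ℝ) ≤ |t| ^ ε := by positivity
  have hTv : (0:ℝ) ≤ |t| ^ (ε-1) := by positivity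
  have hTw : (0:ℝ) ≤ |t| ^ (ε-2) := by positivity
  have hA : |auxH1 s ε t| ≤ 2 * (|t| + |t| ^ ε) := by
    unfold auxH1
    rw [hat]
    calc |2*t + (1+ε) * |t| ^ ε * s| ≤ |2*t| + |(1+ε) * |t| ^ ε * s| := abs_add_le _ _
      _ = 2 * |t| + (1+ε) * |t| ^ ε := by
          rw [abs_mul, abs_mul, abs_mul, hs1, mul_one,
            abs_of_nonneg hTe, abs_of_nonneg (by linarith : (0:ℝ) ≤ 1+ε)]
          norm_num
      _ ≤ 2 * (|t| + |t| ^ ε) := by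
          have := mul_le_mul_of_nonneg_right (by linarith : (1:ℝ)+ε ≤ 2) hTe
          linarith
  have hB : |auxH2 s ε t| ≤ 2 * (1 + |t| ^ (ε-1)) := by
    unfold auxH2
    have hprod : (0:ℝ) ≤ (1+ε) * ε * |t| ^ (ε-1) :=
      mul_nonneg (mul_nonneg (by linarith) hε0.le) hTv
    have h2 : (1+ε) * ε ≤ 2 := by nlinarith
    have h3 := mul_le_mul_of_nonneg_right h2 hTv
    rw [hat, abs_of_nonneg (by linarith : (0:ℝ) ≤ 2 + (1+ε) * ε * |t| ^ (ε-1))]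
    linarith
  have hG : |auxH3 s ε t| ≤ 2 * |t| ^ (ε-2) := by
    unfold auxH3
    rw [hat, abs_mul, abs_mul, hs1, mul_one, abs_of_nonneg hTw]
    have h1 : |(1+ε) * ε * (ε-1)| ≤ 2 := by
      rw [abs_mul, abs_mul, abs_of_nonneg (by linarith : (0:ℝ) ≤ 1+ε),
        abs_of_nonneg hε0.le, abs_of_nonpos (by linarith : ε - 1 ≤ 0)]
      nlinarith [pow_nonneg hε0.le 3]
    exact mul_le_mul_of_nonneg_right h1 hTw
  have hP := P3_abs_bound ε |t| t (auxH1 s ε t) (auxH2 s ε t) (auxH3 s ε t)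
    hε0 hε1 ha rfl hA hB hG
  have hE : auxE s ε t = Real.exp (t ^ 2 + |t| ^ (1+ε)) := by
    unfold auxE; rw [hat]
  calc |auxD3 s ε t|
      = |3 * auxH2 s ε t + t * auxH3 s ε t + 3*(auxH1 s ε t)^2
          + 3*t*(auxH1 s ε t)*(auxH2 s ε t) + t*(auxH1 s ε t)^3|
        * Real.exp (t ^ 2 + |t| ^ (1+ε)) := by
        unfold auxD3; rw [hE, abs_mul, Real.abs_exp]
    _ ≤ 240 * (|t| ^ (ε-1) + t ^ 4) * Real.exp (t ^ 2 + |t| ^ (1+ε)) := by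
        have ht4 : |t| ^ 4 = t ^ 4 := by
          rcases abs_cases t with ⟨h,_⟩|⟨h,_⟩ <;> rw [h] <;> ring
        rw [← ht4]
        exact mul_le_mul_of_nonneg_right hP (Real.exp_nonneg _)

lemma main_side (s ε t : ℝ) (hs : s = 1 ∨ s = -1) (hst : 0 < s * t) :
    (DifferentiableAt ℝ (fEps ε) t ∧ DifferentiableAt ℝ (deriv (fEps ε)) t ∧
      DifferentiableAt ℝ (deriv (deriv (fEps ε))) t) ∧
    deriv (deriv (deriv (fEps ε))) t = auxD3 s ε t := by
  have hss : s * s = 1 := by rcases hs with h|h <;> subst h <;> norm_num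
  set U : Set ℝ := {x | 0 < s * x} with hUdef
  have hUopen : IsOpen U := isOpen_lt continuous_const (continuous_const.mul continuous_id)
  have habs : ∀ x ∈ U, |x| = s * x := by
    intro x hx
    have hx' : 0 < s * x := hx
    rcases hs with h|h <;> subst h
    · rw [one_mul] at hx' ⊢; exact abs_of_pos hx'
    · have : x < 0 := by linarith
      rw [abs_of_neg this]; ring
  have hfeq : Set.EqOn (fEps ε) (fun x => x * auxE s ε x) U := fun x hx => by
    unfold fEps auxE; rw [habs x hx]
  have hd1 : ∀ x ∈ U, HasDerivAt (fEps ε) (auxD1 s ε x) x := fun x hx =>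
    (hasDerivAt_f s ε x hx).congr_of_eventuallyEq
      (Filter.eventuallyEq_of_mem (hUopen.mem_nhds hx) hfeq)
  have hder1 : Set.EqOn (deriv (fEps ε)) (auxD1 s ε) U := fun x hx => (hd1 x hx).deriv
  have hd2 : ∀ x ∈ U, HasDerivAt (deriv (fEps ε)) (auxD2 s ε x) x := fun x hx =>
    (hasDerivAt_auxD1 s ε x hss hx).congr_of_eventuallyEq
      (Filter.eventuallyEq_of_mem (hUopen.mem_nhds hx) hder1)
  have hder2 : Set.EqOn (deriv (deriv (fEps ε))) (auxD2 s ε) U := fun x hx => (hd2 x hx).deriv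
  have hd3 : ∀ x ∈ U, HasDerivAt (deriv (deriv (fEps ε))) (auxD3 s ε x) x := fun x hx =>
    (hasDerivAt_auxD2 s ε x hss hx).congr_of_eventuallyEq
      (Filter.eventuallyEq_of_mem (hUopen.mem_nhds hx) hder2)
  have ht : t ∈ U := hst
  exact ⟨⟨(hd1 t ht).differentiableAt, (hd2 t ht).differentiableAt,
    (hd3 t ht).differentiableAt⟩, (hd3 t ht).deriv⟩

theorem third_deriv_fEps_bound :
    ∃ C : ℝ, 0 < C ∧ ∀ ε ∈ Set.Ioc (0 : ℝ) 1, ∀ t : ℝ, t ≠ 0 →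
      (DifferentiableAt ℝ (fEps ε) t ∧ DifferentiableAt ℝ (deriv (fEps ε)) t ∧
        DifferentiableAt ℝ (deriv (deriv (fEps ε))) t) ∧
      |deriv (deriv (deriv (fEps ε))) t|
        ≤ C * (|t| ^ (ε - 1) + t ^ 4) * Real.exp (t ^ 2 + |t| ^ (1 + ε)) := by
  refine ⟨240, by norm_num, ?_⟩
  rintro ε ⟨hε0, hε1⟩ t ht
  rcases ht.lt_or_gt with h | h
  · have hst : 0 < (-1) * t := by linarith
    obtain ⟨hdiff, heq⟩ := main_side (-1) ε t (Or.inr rfl) hst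
    exact ⟨hdiff, heq ▸ auxD3_bound (-1) ε t (Or.inr rfl) hε0 hε1 hst⟩
  · have hst : 0 < (1:ℝ) * t := by linarith
    obtain ⟨hdiff, heq⟩ := main_side 1 ε t (Or.inl rfl) hst
    exact ⟨hdiff, heq ▸ auxD3_bound 1 ε t (Or.inl rfl) hε0 hε1 hst⟩
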